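/- Let X be a separable Banach space, Y a Banach space, G ⊂ X open, and f : G → Y a mapping. Let M be the set of all x ∈ G at which f is Lipschitz and for which there exists v ∈ X such that the one-sided directional derivative f'_+(x,v) exists but the one-sided Hadamard directional derivative f'_{H+}(x,v) does not exist. Then M is σ-directionally porous. -/

import Mathlib

open Filter Metric Set Topology MeasureTheory

section CommonDefs
variable {X Y : Type*}

/-- `f` is (pointwise) Lipschitz at `x`:
`limsup_{y→x} ‖f y - f x‖/‖y - x‖ < ∞`. -/
def LipschitzAtPt [NormedAddCommGroup X] [NormedAddCommGroup Y]
    (f : X → Y) (x : X) : Prop :=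
  ∃ K > (0:ℝ), ∃ δ > (0:ℝ), ∀ y ∈ ball x δ, ‖f y - f x‖ ≤ K * ‖y - x‖

/-- The (two-sided) Hadamard directional derivative of `f` at `x` in direction `v` is `y`:
`(f (x + t z) - f x)/t → y` as `z → v`, `t → 0`, `t ≠ 0`. -/
def HadamardDerivAt [NormedAddCommGroup X] [NormedSpace ℝ X]
    [NormedAddCommGroup Y] [NormedSpace ℝ Y]
    (f : X → Y) (x v : X) (y : Y) : Prop :=
  Tendsto (fun p : ℝ × X => p.1⁻¹ • (f (x + p.1 • p.2) - f x))
    ((𝓝[≠] (0:ℝ)) ×ˢ 𝓝 v) (𝓝 y)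

/-- The one-sided Hadamard directional derivative of `f` at `x` in direction `v` is `y`:
`(f (x + t z) - f x)/t → y` as `z → v`, `t → 0+`. -/
def HadamardPlusDerivAt [NormedAddCommGroup X] [NormedSpace ℝ X]
    [NormedAddCommGroup Y] [NormedSpace ℝ Y]
    (f : X → Y) (x v : X) (y : Y) : Prop :=
  Tendsto (fun p : ℝ × X => p.1⁻¹ • (f (x + p.1 • p.2) - f x))
    ((𝓝[>] (0:ℝ)) ×ˢ 𝓝 v) (𝓝 y)

/-- `f` is Gâteaux differentiable at `x` with derivative the continuous linear map `L`. -/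
def GateauxDiffAt [NormedAddCommGroup X] [NormedSpace ℝ X]
    [NormedAddCommGroup Y] [NormedSpace ℝ Y]
    (f : X → Y) (x : X) (L : X →L[ℝ] Y) : Prop :=
  ∀ v : X, Tendsto (fun t : ℝ => t⁻¹ • (f (x + t • v) - f x)) (𝓝[≠] (0:ℝ)) (𝓝 (L v))

/-- `f` is Hadamard differentiable at `x` with derivative the continuous linear map `L`. -/
def HadamardDiffAt [NormedAddCommGroup X] [NormedSpace ℝ X]
    [NormedAddCommGroup Y] [NormedSpace ℝ Y]
    (f : X → Y) (x : X) (L : X →L[ℝ] Y) : Prop :=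
  ∀ v : X, HadamardDerivAt f x v (L v)

/-- `A` is directionally porous at `x`. -/
def DirPorousAt [NormedAddCommGroup X] [NormedSpace ℝ X] (A : Set X) (x : X) : Prop :=
  ∃ v : X, v ≠ 0 ∧ ∃ p > (0:ℝ), ∃ t : ℕ → ℝ, (∀ n, 0 < t n) ∧
    Tendsto t atTop (𝓝 (0:ℝ)) ∧ ∀ n, ball (x + t n • v) (p * t n) ∩ A = ∅

/-- `A` is a countable union of directionally porous sets. -/
def SigmaDirPorous [NormedAddCommGroup X] [NormedSpace ℝ X] (A : Set X) : Prop :=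
  ∃ S : ℕ → Set X, A = ⋃ n, S n ∧ ∀ n, ∀ x ∈ S n, DirPorousAt (S n) x

/-- `A` is porous at `x`. -/
def PorousAt [NormedAddCommGroup X] (A : Set X) (x : X) : Prop :=
  ∃ p > (0:ℝ), ∃ y : ℕ → X, (∀ n, y n ≠ x) ∧ Tendsto y atTop (𝓝 x) ∧
    ∀ n, ball (y n) (p * ‖y n - x‖) ∩ A = ∅

/-- `A` is a countable union of porous sets. -/
def SigmaPorous [NormedAddCommGroup X] (A : Set X) : Prop :=
  ∃ S : ℕ → Set X, A = ⋃ n, S n ∧ ∀ n, ∀ x ∈ S n, PorousAt (S n) x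

end CommonDefs
set_option maxHeartbeats 1000000 in
theorem my_porous_aux {X Y : Type*} [NormedAddCommGroup X] [NormedSpace ℝ X]
    [NormedAddCommGroup Y] [NormedSpace ℝ Y]
    (f : X → Y) (K δ : ℝ) (hK : 1 ≤ K) (hδ : 0 < δ) (A : Set X)
    (hA : ∀ x' ∈ A, ∀ w ∈ ball x' δ, ‖f w - f x'‖ ≤ K * ‖w - x'‖)
    (x : X) (hxA : x ∈ A) (v : X)
    (hderiv : ∃ y : Y, Tendsto (fun t : ℝ => t⁻¹ • (f (x + t • v) - f x)) (𝓝[>] (0:ℝ)) (𝓝 y))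
    (hnH : ¬ ∃ y : Y, HadamardPlusDerivAt f x v y) :
    DirPorousAt A x := by
  obtain ⟨y, hy⟩ := hderiv
  have hK0 : (0:ℝ) < K := lt_of_lt_of_le one_pos hK
  -- v ≠ 0
  have hv0 : v ≠ 0 := by
    rintro rfl
    apply hnH
    refine ⟨0, ?_⟩
    rw [HadamardPlusDerivAt, Metric.tendsto_nhds]
    intro ε hε
    have h1 : ∀ᶠ s in 𝓝[>] (0:ℝ), 0 < s ∧ s < δ := by
      have : Ioo (0:ℝ) δ ∈ 𝓝[>] (0:ℝ) := Ioo_mem_nhdsGT_of_mem ⟨le_refl 0, hδ⟩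
      filter_upwards [this] with s hs
      exact ⟨hs.1, hs.2⟩
    have h2 : ∀ᶠ z in 𝓝 (0:X), ‖z‖ < min 1 (ε/(2*K)) := by
      have hm : (0:ℝ) < min 1 (ε/(2*K)) := lt_min one_pos (by positivity)
      filter_upwards [Metric.ball_mem_nhds (0:X) hm] with z hz
      rwa [mem_ball_zero_iff] at hz
    filter_upwards [h1.prod_mk h2] with p hp
    obtain ⟨⟨hp1, hp2⟩, hp3⟩ := hp
    have hzn1 : ‖p.2‖ < 1 := lt_of_lt_of_le hp3 (min_le_left _ _)
    have hzn2 : ‖p.2‖ < ε/(2*K) := lt_of_lt_of_le hp3 (min_le_right _ _)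
    have hmem : x + p.1 • p.2 ∈ ball x δ := by
      rw [mem_ball, dist_eq_norm, add_sub_cancel_left, norm_smul, Real.norm_eq_abs,
        abs_of_pos hp1]
      nlinarith [norm_nonneg p.2]
    have hb := hA x hxA (x + p.1 • p.2) hmem
    rw [add_sub_cancel_left, norm_smul, Real.norm_eq_abs, abs_of_pos hp1] at hb
    rw [dist_zero_right, norm_smul, Real.norm_eq_abs, abs_inv, abs_of_pos hp1]
    have h4 : p.1⁻¹ * ‖f (x + p.1 • p.2) - f x‖ ≤ p.1⁻¹ * (K * (p.1 * ‖p.2‖)) := by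
      apply mul_le_mul_of_nonneg_left hb (by positivity)
    have h5 : p.1⁻¹ * (K * (p.1 * ‖p.2‖)) = K * ‖p.2‖ := by
      field_simp
    rw [lt_div_iff₀ (by positivity : (0:ℝ) < 2*K)] at hzn2
    nlinarith [norm_nonneg p.2]
  -- extract ε witnessing failure of the Hadamard limit y
  have key : ∃ ε > (0:ℝ), ∃ᶠ p : ℝ × X in (𝓝[>] (0:ℝ)) ×ˢ 𝓝 v,
      ε ≤ dist (p.1⁻¹ • (f (x + p.1 • p.2) - f x)) y := by
    by_contra h
    push_neg at h
    apply hnH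
    refine ⟨y, ?_⟩
    rw [HadamardPlusDerivAt, Metric.tendsto_nhds]
    intro ε hε
    have := h ε hε
    exact this
  obtain ⟨ε, hε, hfreq⟩ := key
  set ρ : ℝ := ε / (8 * K) with hρdef
  have hρ : 0 < ρ := by positivity
  have hρle : ρ ≤ ε/8 := by
    apply div_le_div_of_nonneg_left hε.le (by norm_num)
    linarith
  have hKρ : K * ρ = ε/8 := by
    rw [hρdef]; field_simp
  -- τ from the one-sided derivative
  rw [Metric.tendsto_nhds] at hy
  have hy4 := hy (ε/4) (by positivity)
  rw [Filter.eventually_iff, mem_nhdsGT_iff_exists_Ioo_subset] at hy4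
  obtain ⟨τ, hτmem, hτ⟩ := hy4
  have hτ0 : (0:ℝ) < τ := hτmem
  -- main claim
  have claim : ∀ θ : ℝ, 0 < θ → ∃ t : ℝ, 0 < t ∧ t < θ ∧ ball (x + t • v) (ρ * t) ∩ A = ∅ := by
    intro θ hθ
    set c := min θ (min τ (δ / (ε + 1))) with hc
    have hc0 : 0 < c := lt_min hθ (lt_min hτ0 (by positivity))
    have h1 : ∀ᶠ s in 𝓝[>] (0:ℝ), 0 < s ∧ s < c := by
      have : Ioo (0:ℝ) c ∈ 𝓝[>] (0:ℝ) := Ioo_mem_nhdsGT_of_mem ⟨le_refl 0, hc0⟩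
      filter_upwards [this] with s hs
      exact ⟨hs.1, hs.2⟩
    have h2 : ∀ᶠ z in 𝓝 v, ‖z - v‖ < ε / (4*K) := by
      filter_upwards [Metric.ball_mem_nhds v (by positivity : (0:ℝ) < ε/(4*K))] with z hz
      rwa [mem_ball, dist_eq_norm] at hz
    obtain ⟨p, hdist, ⟨hp1, hp2⟩, hp3⟩ := (hfreq.and_eventually (h1.prod_mk h2)).exists
    set t := p.1 with ht
    set z := p.2 with hz
    refine ⟨t, hp1, lt_of_lt_of_le hp2 (min_le_left _ _), ?_⟩
    rw [Set.eq_empty_iff_forall_notMem]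
    rintro x' ⟨hball, hx'A⟩
    have htτ : t < τ := lt_of_lt_of_le hp2 (le_trans (min_le_right _ _) (min_le_left _ _))
    have htδ : t < δ/(ε+1) := lt_of_lt_of_le hp2 (le_trans (min_le_right _ _) (min_le_right _ _))
    have hεt : (ε+1) * t < δ := by
      rw [lt_div_iff₀ (by positivity : (0:ℝ) < ε+1)] at htδ
      linarith
    have d1 : ‖x + t • v - x'‖ < ρ * t := by
      rw [mem_ball, dist_eq_norm] at hball
      rwa [norm_sub_rev]
    have hρtδ : ρ * t < δ := by nlinarith
    have hwsub : x + t • z - (x + t • v) = t • (z - v) := by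
      rw [smul_sub]; abel
    have d2 : ‖x + t • z - x'‖ ≤ t * ‖z - v‖ + ρ * t := by
      calc ‖x + t • z - x'‖ = ‖(x + t • z - (x + t • v)) + (x + t • v - x')‖ := by
            congr 1; abel
        _ ≤ ‖x + t • z - (x + t • v)‖ + ‖x + t • v - x'‖ := norm_add_le _ _
        _ ≤ t * ‖z - v‖ + ρ * t := by
            rw [hwsub, norm_smul, Real.norm_eq_abs, abs_of_pos hp1]
            linarith
    have hKz : K * ‖z - v‖ ≤ ε/4 := by
      rw [lt_div_iff₀ (by positivity : (0:ℝ) < 4*K)] at hp3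
      nlinarith [norm_nonneg (z - v)]
    have hzv4 : ‖z - v‖ ≤ ε/4 := by nlinarith [norm_nonneg (z - v)]
    have hwmem : x + t • z ∈ ball x' δ := by
      rw [mem_ball, dist_eq_norm]
      have : t * ‖z - v‖ + ρ * t < δ := by nlinarith [norm_nonneg (z - v)]
      exact lt_of_le_of_lt d2 this
    have hvmem : x + t • v ∈ ball x' δ := by
      rw [mem_ball, dist_eq_norm]
      exact lt_trans d1 hρtδ
    have E2 := hA x' hx'A (x + t • z) hwmem
    have E3 := hA x' hx'A (x + t • v) hvmem
    have E4 : ‖f (x + t • v) - f x - t • y‖ ≤ (ε/4) * t := by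
      have h6 := hτ ⟨hp1, htτ⟩
      rw [Set.mem_setOf_eq, dist_eq_norm] at h6
      have heq : f (x + t • v) - f x - t • y = t • (t⁻¹ • (f (x + t • v) - f x) - y) := by
        rw [smul_sub, smul_inv_smul₀ (ne_of_gt hp1)]
      rw [heq, norm_smul, Real.norm_eq_abs, abs_of_pos hp1]
      have h7 := mul_le_mul_of_nonneg_left h6.le hp1.le
      linarith
    have E1 : ε * t ≤ ‖f (x + t • z) - f x - t • y‖ := by
      rw [dist_eq_norm] at hdist
      have heq : f (x + t • z) - f x - t • y = t • (t⁻¹ • (f (x + t • z) - f x) - y) := by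
        rw [smul_sub, smul_inv_smul₀ (ne_of_gt hp1)]
      rw [heq, norm_smul, Real.norm_eq_abs, abs_of_pos hp1]
      have h7 := mul_le_mul_of_nonneg_left hdist hp1.le
      linarith
    have tri : ‖f (x + t • z) - f x - t • y‖ ≤
        ‖f (x + t • z) - f x'‖ + ‖f (x + t • v) - f x'‖ + ‖f (x + t • v) - f x - t • y‖ := by
      have heq : f (x + t • z) - f x - t • y =
          (f (x + t • z) - f x') - (f (x + t • v) - f x') + (f (x + t • v) - f x - t • y) := by
        abel
      rw [heq]
      calc ‖_ + _‖ ≤ ‖(f (x + t • z) - f x') - (f (x + t • v) - f x')‖ +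
              ‖f (x + t • v) - f x - t • y‖ := norm_add_le _ _
        _ ≤ _ := by
            have := norm_sub_le (f (x + t • z) - f x') (f (x + t • v) - f x')
            linarith
    have B2 : ‖f (x + t • z) - f x'‖ ≤ (ε/4) * t + (ε/8) * t := by
      calc ‖f (x + t • z) - f x'‖ ≤ K * ‖x + t • z - x'‖ := E2
        _ ≤ K * (t * ‖z - v‖ + ρ * t) := mul_le_mul_of_nonneg_left d2 hK0.le
        _ = (K * ‖z - v‖) * t + (K * ρ) * t := by ring
        _ ≤ (ε/4) * t + (ε/8) * t := by
            rw [hKρ]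
            have := mul_le_mul_of_nonneg_right hKz hp1.le
            linarith
    have B3 : ‖f (x + t • v) - f x'‖ ≤ (ε/8) * t := by
      calc ‖f (x + t • v) - f x'‖ ≤ K * ‖x + t • v - x'‖ := E3
        _ ≤ K * (ρ * t) := mul_le_mul_of_nonneg_left d1.le hK0.le
        _ = (ε/8) * t := by rw [← mul_assoc, hKρ]
    have hεtpos : 0 < ε * t := mul_pos hε hp1
    linarith
  choose T hT using fun n : ℕ => claim (1/((n:ℝ)+1)) (by positivity)
  refine ⟨v, hv0, ρ, hρ, T, fun n => (hT n).1, ?_, fun n => (hT n).2.2⟩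
  exact squeeze_zero (fun n => (hT n).1.le) (fun n => (hT n).2.1.le)
    tendsto_one_div_add_atTop_nhds_zero_nat

theorem stmt6 {X Y : Type*} [NormedAddCommGroup X] [NormedSpace ℝ X] [CompleteSpace X]
    [TopologicalSpace.SeparableSpace X]
    [NormedAddCommGroup Y] [NormedSpace ℝ Y] [CompleteSpace Y]
    (G : Set X) (hG : IsOpen G) (f : X → Y) :
    SigmaDirPorous {x ∈ G | LipschitzAtPt f x ∧ ∃ v : X,
      (∃ y : Y, Tendsto (fun t : ℝ => t⁻¹ • (f (x + t • v) - f x)) (𝓝[>] (0:ℝ)) (𝓝 y)) ∧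
      ¬ (∃ y : Y, HadamardPlusDerivAt f x v y)} := by
  classical
  set M : Set X := {x ∈ G | LipschitzAtPt f x ∧ ∃ v : X,
      (∃ y : Y, Tendsto (fun t : ℝ => t⁻¹ • (f (x + t • v) - f x)) (𝓝[>] (0:ℝ)) (𝓝 y)) ∧
      ¬ (∃ y : Y, HadamardPlusDerivAt f x v y)} with hMdef
  refine ⟨fun k => {x ∈ M | ∀ w ∈ ball x (1/((k.unpair.2 : ℝ)+1)),
      ‖f w - f x‖ ≤ ((k.unpair.1 : ℝ)+1) * ‖w - x‖}, ?_, ?_⟩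
  · ext x
    simp only [Set.mem_iUnion, Set.mem_sep_iff]
    constructor
    · intro hx
      obtain ⟨K, hKpos, δ, hδpos, hlip⟩ := hx.2.1
      obtain ⟨m, hm⟩ := exists_nat_one_div_lt hδpos
      refine ⟨Nat.pair ⌈K⌉₊ m, hx, ?_⟩
      intro w hw
      rw [Nat.unpair_pair] at hw ⊢
      have hball : w ∈ ball x δ := by
        rw [mem_ball] at hw ⊢
        exact lt_trans hw hm
      calc ‖f w - f x‖ ≤ K * ‖w - x‖ := hlip w hball
        _ ≤ ((⌈K⌉₊ : ℝ) + 1) * ‖w - x‖ := by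
            apply mul_le_mul_of_nonneg_right _ (norm_nonneg _)
            have := Nat.le_ceil K
            linarith
    · rintro ⟨k, hk, -⟩
      exact hk
  · intro k x hx
    obtain ⟨hxM, hlip⟩ := hx
    obtain ⟨hxG, hL, v, hderiv, hnH⟩ := hxM
    exact my_porous_aux f ((k.unpair.1 : ℝ)+1) (1/((k.unpair.2 : ℝ)+1))
      (by linarith [Nat.cast_nonneg (α := ℝ) k.unpair.1]) (by positivity)
      _ (fun x' hx' => hx'.2) x ⟨⟨hxG, hL, v, hderiv, hnH⟩, hlip⟩ v hderiv hnH
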